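/- Let M be a matroid on a finite ground set E and let A = {χ_B : B a base of M} ⊆ ℤ^E be the set of indicator vectors of its bases. Then A is normal: every element of the subgroup of (ℤ^E,+) generated by A whose image in ℝ^E lies in the convex cone of nonnegative real combinations of A already belongs to the additive submonoid generated by A. -/

import Mathlib

open Finset

namespace MBIN

attribute [local instance] Classical.propDecidable

variable {E : Type} [Fintype E] (M : Matroid E)

/-- Independence for finsets. -/
def Ind (I : Finset E) : Prop := M.Indep (I : Set E)

variable {M}

lemma Ind.subset {I J : Finset E} (hJ : Ind M J) (h : I ⊆ J) : Ind M I :=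
  Matroid.Indep.subset hJ (by exact_mod_cast h)

lemma ind_empty : Ind M (∅ : Finset E) := by
  simpa [Ind] using M.empty_indep

lemma Ind.augment {I J : Finset E} (hI : Ind M I) (hJ : Ind M J) (h : I.card < J.card) :
    ∃ x ∈ J, x ∉ I ∧ Ind M (insert x I) := by
  obtain ⟨e, he, hi⟩ := Matroid.Indep.augment hI hJ (by
    rw [Set.encard_coe_eq_coe_finsetCard, Set.encard_coe_eq_coe_finsetCard]
    exact_mod_cast h)
  refine ⟨e, by exact_mod_cast he.1, by exact_mod_cast he.2, ?_⟩
  simpa [Ind] using hi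

variable (M)

/-- Rank of a finset : maximum size of an independent subset. -/
noncomputable def rk (X : Finset E) : ℕ :=
  ((X.powerset.filter fun I => Ind M I)).sup Finset.card

variable {M}

lemma card_le_rk {I X : Finset E} (hI : Ind M I) (hIX : I ⊆ X) : I.card ≤ rk M X :=
  Finset.le_sup (by simp [Finset.mem_filter, Finset.mem_powerset, hIX, hI])

lemma exists_basis (X : Finset E) : ∃ I ⊆ X, Ind M I ∧ I.card = rk M X := by
  have hne : (X.powerset.filter fun I => Ind M I).Nonempty :=
    ⟨∅, by simp [Finset.mem_filter, ind_empty]⟩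
  obtain ⟨I, hI, hIe⟩ := Finset.exists_mem_eq_sup _ hne Finset.card
  simp only [Finset.mem_filter, Finset.mem_powerset] at hI
  exact ⟨I, hI.1, hI.2, hIe.symm⟩

lemma rk_mono {X Y : Finset E} (h : X ⊆ Y) : rk M X ≤ rk M Y := by
  obtain ⟨I, hIX, hI, hIc⟩ := exists_basis (M := M) X
  rw [← hIc]; exact card_le_rk hI (hIX.trans h)

lemma rk_le_card (X : Finset E) : rk M X ≤ X.card := by
  obtain ⟨I, hIX, _, hIc⟩ := exists_basis (M := M) X
  rw [← hIc]; exact Finset.card_le_card hIX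

lemma Ind.rk_eq {I : Finset E} (hI : Ind M I) : rk M I = I.card :=
  le_antisymm (rk_le_card I) (card_le_rk hI Finset.Subset.rfl)

lemma ind_of_rk_eq_card {I : Finset E} (h : rk M I = I.card) : Ind M I := by
  obtain ⟨J, hJI, hJ, hJc⟩ := exists_basis (M := M) I
  have : J = I := Finset.eq_of_subset_of_card_le hJI (by omega)
  rwa [← this]

/-- A maximal independent subset of `X` has cardinality `rk M X`. -/
lemma card_eq_rk_of_maximal {I X : Finset E} (hI : Ind M I) (hIX : I ⊆ X)
    (hmax : ∀ x ∈ X, x ∉ I → ¬ Ind M (insert x I)) : I.card = rk M X := by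
  refine le_antisymm (card_le_rk hI hIX) ?_
  by_contra h
  obtain ⟨J, hJX, hJ, hJc⟩ := exists_basis (M := M) X
  obtain ⟨x, hxJ, hxI, hx⟩ := hI.augment hJ (by omega)
  exact hmax x (hJX hxJ) hxI hx

/-- Any independent subset of `X` extends to a maximal-size one. -/
lemma exists_basis_superset {I X : Finset E} (hI : Ind M I) (hIX : I ⊆ X) :
    ∃ J, I ⊆ J ∧ J ⊆ X ∧ Ind M J ∧ J.card = rk M X := by
  by_cases hmax : ∀ x ∈ X, x ∉ I → ¬ Ind M (insert x I)
  · exact ⟨I, Finset.Subset.rfl, hIX, hI, card_eq_rk_of_maximal hI hIX hmax⟩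
  push_neg at hmax
  obtain ⟨x, hxX, hxI, hx⟩ := hmax
  have hcard : X.card - (insert x I).card < X.card - I.card := by
    have h1 : (insert x I).card = I.card + 1 := Finset.card_insert_of_notMem hxI
    have h2 : (insert x I).card ≤ X.card := Finset.card_le_card (Finset.insert_subset hxX hIX)
    omega
  obtain ⟨J, hJ1, hJ2, hJ3, hJ4⟩ := exists_basis_superset hx (Finset.insert_subset hxX hIX)
  exact ⟨J, (Finset.subset_insert x I).trans hJ1, hJ2, hJ3, hJ4⟩
termination_by X.card - I.card

/-- Closure monotonicity, rank form. -/
lemma rk_insert_eq_of_subset {T₀ T : Finset E} {y : E} (hT : T₀ ⊆ T)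
    (h : rk M (insert y T₀) = rk M T₀) : rk M (insert y T) = rk M T := by
  obtain ⟨J₀, hJ₀T, hJ₀, hJ₀c⟩ := exists_basis (M := M) T₀
  obtain ⟨J, hJ₀J, hJT, hJ, hJc⟩ := exists_basis_superset hJ₀ (hJ₀T.trans hT)
  refine le_antisymm ?_ (rk_mono (Finset.subset_insert _ _))
  by_contra hlt
  push_neg at hlt
  obtain ⟨K, hKX, hK, hKc⟩ := exists_basis (M := M) (insert y T)
  obtain ⟨x, hxK, hxJ, hx⟩ := hJ.augment hK (by omega)
  have hxT : x ∈ insert y T := hKX hxK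
  rcases Finset.mem_insert.1 hxT with rfl | hxT
  · -- x = y : contradicts rank of insert y T₀
    have : Ind M (insert x J₀) := hx.subset (Finset.insert_subset_insert _ hJ₀J)
    have hc : (insert x J₀).card ≤ rk M (insert x T₀) :=
      card_le_rk this (Finset.insert_subset_insert _ hJ₀T)
    have : x ∉ J₀ := fun hc => hxJ (hJ₀J hc)
    rw [Finset.card_insert_of_notMem this] at hc
    omega
  · have hc : (insert x J).card ≤ rk M T :=
      card_le_rk hx (Finset.insert_subset hxT hJT)
    rw [Finset.card_insert_of_notMem hxJ] at hc
    omega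

end MBIN

namespace MBIN

set_option linter.unusedSectionVars false

attribute [local instance] Classical.propDecidable

variable {E : Type} [Fintype E] {M : Matroid E}

/-- `Dset M I x` : the fundamental cocircuit-ish set: elements `v ∈ I` such that
`insert x (I.erase v)` is independent. -/
noncomputable def Dset (M : Matroid E) (I : Finset E) (x : E) : Finset E :=
  I.filter fun v => Ind M (insert x (I.erase v))

lemma Dset_subset (I : Finset E) (x : E) : Dset M I x ⊆ I := Finset.filter_subset _ _

lemma mem_Dset {I : Finset E} {x v : E} :
    v ∈ Dset M I x ↔ v ∈ I ∧ Ind M (insert x (I.erase v)) := Finset.mem_filter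

lemma rk_insert_dep {I : Finset E} {x : E} (hI : Ind M I) (hx : x ∉ I)
    (hdep : ¬ Ind M (insert x I)) : rk M (insert x I) = I.card := by
  refine le_antisymm ?_ (card_le_rk hI (Finset.subset_insert _ _))
  obtain ⟨K, hKX, hK, hKc⟩ := exists_basis (M := M) (insert x I)
  by_contra h
  have hcard : (insert x I).card = I.card + 1 := Finset.card_insert_of_notMem hx
  have hKle : K.card ≤ I.card + 1 := hcard ▸ Finset.card_le_card hKX
  have : K = insert x I := Finset.eq_of_subset_of_card_le hKX (by omega)
  exact hdep (this ▸ hK)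

/-- The "fundamental circuit" `insert x (Dset M I x)` is dependent. -/
lemma dep_insert_Dset {I : Finset E} {x : E} (hI : Ind M I) (hx : x ∉ I)
    (hdep : ¬ Ind M (insert x I)) : ¬ Ind M (insert x (Dset M I x)) := by
  intro hind
  have hsub : insert x (Dset M I x) ⊆ insert x I :=
    Finset.insert_subset_insert _ (Dset_subset I x)
  obtain ⟨J, hJ1, hJ2, hJ3, hJ4⟩ := exists_basis_superset hind hsub
  rw [rk_insert_dep hI hx hdep] at hJ4
  have hxJ : x ∈ J := hJ1 (Finset.mem_insert_self _ _)
  -- J = insert x (J.erase x), J.erase x ⊆ I with card I.card - 1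
  have hJex : J.erase x ⊆ I := by
    intro v hv
    have := hJ2 (Finset.erase_subset _ _ hv)
    rcases Finset.mem_insert.1 this with rfl | h
    · exact absurd rfl (Finset.ne_of_mem_erase hv)
    · exact h
  have hJec : (J.erase x).card = I.card - 1 := by
    rw [Finset.card_erase_of_mem hxJ]; omega
  -- there is exactly one v ∈ I \ J.erase x
  have hIc1 : 1 ≤ I.card := by
    by_contra h
    have hIe : I = ∅ := Finset.card_eq_zero.1 (by omega)
    subst hIe
    refine hdep (hind.subset ?_)
    simp [Dset]
  have hsd : (I \ J.erase x).card = 1 := by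
    rw [Finset.card_sdiff_of_subset hJex]; omega
  obtain ⟨v, hv⟩ := Finset.card_eq_one.1 hsd
  have hvI : v ∈ I ∧ v ∉ J.erase x := by
    have : v ∈ I \ J.erase x := hv ▸ Finset.mem_singleton_self v
    exact ⟨(Finset.mem_sdiff.1 this).1, (Finset.mem_sdiff.1 this).2⟩
  have hJeq : J.erase x = I.erase v := by
    apply Finset.eq_of_subset_of_card_le
    · intro a ha
      refine Finset.mem_erase.2 ⟨?_, hJex ha⟩
      rintro rfl; exact hvI.2 ha
    · rw [Finset.card_erase_of_mem hvI.1]; omega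
  have hJeq2 : J = insert x (I.erase v) := by
    rw [← hJeq, Finset.insert_erase hxJ]
  have hvD : v ∈ Dset M I x := mem_Dset.2 ⟨hvI.1, hJeq2 ▸ hJ3⟩
  have : v ∈ J := hJ1 (Finset.mem_insert_of_mem hvD)
  have : v ∈ J.erase x := Finset.mem_erase.2 ⟨fun h => hx (h ▸ hvI.1), this⟩
  exact hvI.2 this

/-- Circuit fact: each `y ∈ Dset M I x` is spanned by the rest of the circuit. -/
lemma rk_insert_circuit {I : Finset E} {x y : E} (hI : Ind M I) (hx : x ∉ I)
    (hdep : ¬ Ind M (insert x I)) (hy : y ∈ Dset M I x) :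
    rk M (insert y (insert x ((Dset M I x).erase y))) =
      rk M (insert x ((Dset M I x).erase y)) := by
  have hyI : y ∈ I := Dset_subset I x hy
  have hyD : Ind M (insert x (I.erase y)) := (mem_Dset.1 hy).2
  have hxy : x ≠ y := fun h => hx (h ▸ hyI)
  have hCy : insert y (insert x ((Dset M I x).erase y)) = insert x (Dset M I x) := by
    rw [Finset.insert_comm, Finset.insert_erase hy]
  rw [hCy]
  -- C = insert x D is dependent, C - y is independent
  have hCmy_ind : Ind M (insert x ((Dset M I x).erase y)) := by
    refine hyD.subset ?_
    intro a ha
    rcases Finset.mem_insert.1 ha with rfl | ha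
    · exact Finset.mem_insert_self _ _
    · refine Finset.mem_insert_of_mem (Finset.mem_erase.2
        ⟨Finset.ne_of_mem_erase ha, Dset_subset I x (Finset.mem_of_mem_erase ha)⟩)
  have hxD : x ∉ Dset M I x := fun h => hx (Dset_subset I x h)
  have hcard1 : (insert x ((Dset M I x).erase y)).card = (Dset M I x).card := by
    rw [Finset.card_insert_of_notMem (fun h => hxD (Finset.mem_of_mem_erase h)),
      Finset.card_erase_of_mem hy]
    have : 1 ≤ (Dset M I x).card := Finset.card_pos.2 ⟨y, hy⟩
    omega
  have hrk1 : rk M (insert x ((Dset M I x).erase y)) = (Dset M I x).card := by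
    rw [hCmy_ind.rk_eq, hcard1]
  have hCdep := dep_insert_Dset hI hx hdep
  have hcard2 : (insert x (Dset M I x)).card = (Dset M I x).card + 1 :=
    Finset.card_insert_of_notMem hxD
  have hub : rk M (insert x (Dset M I x)) ≤ (Dset M I x).card := by
    by_contra h
    have h2 : rk M (insert x (Dset M I x)) ≤ (Dset M I x).card + 1 :=
      hcard2 ▸ rk_le_card _
    have : rk M (insert x (Dset M I x)) = (insert x (Dset M I x)).card := by omega
    exact hCdep (ind_of_rk_eq_card this)
  have hlb : (Dset M I x).card ≤ rk M (insert x (Dset M I x)) := by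
    rw [← hrk1]
    exact rk_mono (Finset.insert_subset_insert _ (Finset.erase_subset _ _))
  omega

end MBIN

namespace MBIN

set_option linter.unusedSectionVars false

attribute [local instance] Classical.propDecidable

variable {E : Type} [Fintype E] {M : Matroid E}

section Triangular

variable {I : Finset E} {Q : Finset ℕ} {x y : ℕ → E}

/-- Triangular exchange lemma, rank form. -/
lemma rk_triangular (hI : Ind M I)
    (hx : ∀ i ∈ Q, x i ∉ I)
    (hdep : ∀ i ∈ Q, ¬ Ind M (insert (x i) I))
    (hmem : ∀ i ∈ Q, y i ∈ Dset M I (x i))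
    (htri : ∀ i ∈ Q, ∀ j ∈ Q, i < j → y j ∉ Dset M I (x i))
    (W : Finset E) (hW : (I \ Q.image y) ∪ Q.image x ⊆ W) :
    rk M (W ∪ Q.image y) = rk M W := by
  have aux : ∀ c : ℕ, rk M (W ∪ (Q.filter (· < c)).image y) = rk M W := by
    intro c
    induction c with
    | zero => simp
    | succ c ih =>
      by_cases hc : c ∈ Q
      · have hfil : Q.filter (· < c + 1) = insert c (Q.filter (· < c)) := by
          ext i
          simp only [Finset.mem_filter, Finset.mem_insert]
          constructor
          · rintro ⟨hiQ, hi⟩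
            by_cases h : i = c
            · exact Or.inl h
            · exact Or.inr ⟨hiQ, by omega⟩
          · rintro (h | ⟨hiQ, hi⟩)
            · subst h; exact ⟨hc, by omega⟩
            · exact ⟨hiQ, by omega⟩
        rw [hfil, Finset.image_insert, Finset.union_insert]
        set T := W ∪ (Q.filter (· < c)).image y with hT
        have hstep : rk M (insert (y c) T) = rk M T := by
          refine rk_insert_eq_of_subset (T₀ := insert (x c) ((Dset M I (x c)).erase (y c)))
            ?_ (rk_insert_circuit hI (hx c hc) (hdep c hc) (hmem c hc))
          intro v hv
          rcases Finset.mem_insert.1 hv with rfl | hv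
          · exact Finset.mem_union_left _ (hW (Finset.mem_union_right _
              (Finset.mem_image.2 ⟨c, hc, rfl⟩)))
          have hvD := Finset.mem_of_mem_erase hv
          have hvI : v ∈ I := Dset_subset I (x c) hvD
          by_cases hvQ : v ∈ Q.image y
          · obtain ⟨l, hlQ, rfl⟩ := Finset.mem_image.1 hvQ
            have hlc : l < c := by
              rcases lt_trichotomy l c with h | rfl | h
              · exact h
              · exact absurd rfl (Finset.ne_of_mem_erase hv)
              · exact absurd hvD (htri c hc l hlQ h)
            exact Finset.mem_union_right _ (Finset.mem_image.2 ⟨l, Finset.mem_filter.2 ⟨hlQ, hlc⟩, rfl⟩)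
          · exact Finset.mem_union_left _ (hW (Finset.mem_union_left _
              (Finset.mem_sdiff.2 ⟨hvI, hvQ⟩)))
        rw [hstep, ih]
      · have hfil : Q.filter (· < c + 1) = Q.filter (· < c) := by
          apply Finset.filter_congr
          intro i hiQ
          have hne : i ≠ c := fun h => hc (h ▸ hiQ)
          constructor
          · intro h; omega
          · intro h; omega
        rw [hfil, ih]
  obtain ⟨c, hcQ⟩ : ∃ c : ℕ, ∀ i ∈ Q, i < c := ⟨Q.sup id + 1, fun i hi =>
    Nat.lt_succ_of_le (Finset.le_sup (f := id) hi)⟩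
  have : Q.filter (· < c) = Q := Finset.filter_true_of_mem hcQ
  rw [← this]; exact aux c

/-- Swap corollary: the swapped set is independent. -/
lemma ind_swap (hI : Ind M I)
    (hx : ∀ i ∈ Q, x i ∉ I)
    (hdep : ∀ i ∈ Q, ¬ Ind M (insert (x i) I))
    (hmem : ∀ i ∈ Q, y i ∈ Dset M I (x i))
    (htri : ∀ i ∈ Q, ∀ j ∈ Q, i < j → y j ∉ Dset M I (x i))
    (hxinj : Set.InjOn x Q) (hyinj : Set.InjOn y Q) :
    Ind M ((I \ Q.image y) ∪ Q.image x) := by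
  set S := (I \ Q.image y) ∪ Q.image x with hS
  have hrk := rk_triangular hI hx hdep hmem htri S Finset.Subset.rfl
  have hIsub : I ⊆ S ∪ Q.image y := by
    intro v hv
    by_cases h : v ∈ Q.image y
    · exact Finset.mem_union_right _ h
    · exact Finset.mem_union_left _ (Finset.mem_union_left _ (Finset.mem_sdiff.2 ⟨hv, h⟩))
  have hge : I.card ≤ rk M S := hrk ▸ card_le_rk hI hIsub
  have hYI : Q.image y ⊆ I := fun v hv => by
    obtain ⟨l, hl, rfl⟩ := Finset.mem_image.1 hv
    exact Dset_subset I (x l) (hmem l hl)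
  have hcardY : (Q.image y).card = Q.card := Finset.card_image_of_injOn hyinj
  have hcardX : (Q.image x).card = Q.card := Finset.card_image_of_injOn hxinj
  have hdisj : Disjoint (I \ Q.image y) (Q.image x) := by
    rw [Finset.disjoint_right]
    intro v hv
    obtain ⟨l, hl, rfl⟩ := Finset.mem_image.1 hv
    intro hmem'
    exact hx l hl (Finset.mem_sdiff.1 hmem').1
  have hScard : S.card = I.card := by
    rw [hS, Finset.card_union_of_disjoint hdisj, Finset.card_sdiff_of_subset hYI, hcardY, hcardX]
    have : Q.card ≤ I.card := hcardY ▸ Finset.card_le_card hYI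
    omega
  apply ind_of_rk_eq_card
  refine le_antisymm (rk_le_card _) ?_
  omega

/-- Swap + insert corollary. -/
lemma ind_swap_insert (hI : Ind M I)
    (hx : ∀ i ∈ Q, x i ∉ I)
    (hdep : ∀ i ∈ Q, ¬ Ind M (insert (x i) I))
    (hmem : ∀ i ∈ Q, y i ∈ Dset M I (x i))
    (htri : ∀ i ∈ Q, ∀ j ∈ Q, i < j → y j ∉ Dset M I (x i))
    (hxinj : Set.InjOn x Q) (hyinj : Set.InjOn y Q)
    {w : E} (hwI : w ∉ I) (hwx : w ∉ Q.image x) (hwind : Ind M (insert w I)) :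
    Ind M (insert w ((I \ Q.image y) ∪ Q.image x)) := by
  set S := (I \ Q.image y) ∪ Q.image x with hS
  have hrk := rk_triangular hI hx hdep hmem htri (insert w S)
    ((Finset.subset_insert _ _))
  have hIsub : insert w I ⊆ insert w S ∪ Q.image y := by
    intro v hv
    rcases Finset.mem_insert.1 hv with rfl | hv
    · exact Finset.mem_union_left _ (Finset.mem_insert_self _ _)
    by_cases h : v ∈ Q.image y
    · exact Finset.mem_union_right _ h
    · exact Finset.mem_union_left _ (Finset.mem_insert_of_mem
        (Finset.mem_union_left _ (Finset.mem_sdiff.2 ⟨hv, h⟩)))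
  have hge : (insert w I).card ≤ rk M (insert w S) := hrk ▸ card_le_rk hwind hIsub
  have hYI : Q.image y ⊆ I := fun v hv => by
    obtain ⟨l, hl, rfl⟩ := Finset.mem_image.1 hv
    exact Dset_subset I (x l) (hmem l hl)
  have hcardY : (Q.image y).card = Q.card := Finset.card_image_of_injOn hyinj
  have hcardX : (Q.image x).card = Q.card := Finset.card_image_of_injOn hxinj
  have hdisj : Disjoint (I \ Q.image y) (Q.image x) := by
    rw [Finset.disjoint_right]
    intro v hv
    obtain ⟨l, hl, rfl⟩ := Finset.mem_image.1 hv
    intro hmem'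
    exact hx l hl (Finset.mem_sdiff.1 hmem').1
  have hScard : S.card = I.card := by
    rw [hS, Finset.card_union_of_disjoint hdisj, Finset.card_sdiff_of_subset hYI, hcardY, hcardX]
    have : Q.card ≤ I.card := hcardY ▸ Finset.card_le_card hYI
    omega
  have hwS : w ∉ S := by
    rw [hS]
    intro h
    rcases Finset.mem_union.1 h with h | h
    · exact hwI (Finset.mem_sdiff.1 h).1
    · exact hwx h
  have hwIc : (insert w I).card = I.card + 1 := Finset.card_insert_of_notMem hwI
  have hSc : (insert w S).card = I.card + 1 := by
    rw [Finset.card_insert_of_notMem hwS, hScard]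
  apply ind_of_rk_eq_card
  refine le_antisymm (rk_le_card _) ?_
  omega

end Triangular

end MBIN

namespace MBIN

set_option linter.unusedSectionVars false
set_option maxHeartbeats 1000000

attribute [local instance] Classical.propDecidable

variable {E : Type} [Fintype E] {M : Matroid E}

section Aug

variable {k : ℕ}

/-- Number of parts containing `e`. -/
noncomputable def Ycount (F : Fin k → Finset E) (e : E) : ℕ :=
  (Finset.univ.filter fun j => e ∈ F j).card

def Insertable (M : Matroid E) (F : Fin k → Finset E) (u : E) : Prop :=
  ∃ j, u ∉ F j ∧ Ind M (insert u (F j))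

def Arc (M : Matroid E) (F : Fin k → Finset E) (u v : E) : Prop :=
  ∃ j, u ∉ F j ∧ ¬ Ind M (insert u (F j)) ∧ v ∈ Dset M (F j) u

lemma Ycount_eq_sum (F : Fin k → Finset E) (e : E) :
    Ycount F e = ∑ j : Fin k, (if e ∈ F j then 1 else 0) := by
  rw [Ycount, Finset.card_filter]

lemma exists_seq_of_reflTransGen {α : Type*} {r : α → α → Prop} {a b : α}
    (h : Relation.ReflTransGen r a b) :
    ∃ n : ℕ, ∃ u : ℕ → α, u 0 = a ∧ (∀ i < n, r (u i) (u (i+1))) ∧ u n = b := by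
  induction h with
  | refl => exact ⟨0, fun _ => a, rfl, by omega, rfl⟩
  | tail hbc harc ih =>
    obtain ⟨n, u, hu0, hch, hend⟩ := ih
    rename_i c
    refine ⟨n + 1, fun m => if m ≤ n then u m else c, by simp [hu0], ?_, by simp⟩
    intro i hi
    rcases Nat.lt_succ_iff_lt_or_eq.1 hi with hi | rfl
    · simp only [Nat.le_of_lt hi, Nat.succ_le_of_lt hi, if_pos]
      exact hch i hi
    · simp only [le_refl, if_pos, Nat.not_succ_le_self, if_neg, hend]
      simpa [hend] using harc

/-- The key augmentation step. -/
theorem aug (z : E → ℕ) (hrank : ∀ X : Finset E, ∑ e ∈ X, z e ≤ k * rk M X)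
    (F : Fin k → Finset E) (hF : ∀ j, Ind M (F j)) (hYz : ∀ e, Ycount F e ≤ z e)
    (e₀ : E) (hdef : Ycount F e₀ < z e₀) :
    ∃ F' : Fin k → Finset E, (∀ j, Ind M (F' j)) ∧
      (∀ e, Ycount F' e = Ycount F e + (if e = e₀ then 1 else 0)) := by
  by_cases H : ∃ w, Relation.ReflTransGen (Arc M F) e₀ w ∧ Insertable M F w
  case neg =>
    -- no augmenting path: contradiction with the rank condition
    exfalso
    set U : Finset E := Finset.univ.filter fun v => Relation.ReflTransGen (Arc M F) e₀ v with hU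
    have hmemU : ∀ v, v ∈ U ↔ Relation.ReflTransGen (Arc M F) e₀ v := by
      intro v; simp [hU]
    have hcard : ∀ j, (F j ∩ U).card = rk M U := by
      intro j
      refine card_eq_rk_of_maximal ((hF j).subset Finset.inter_subset_left) Finset.inter_subset_right ?_
      intro v hvU hvFU hvind
      have hreach : Relation.ReflTransGen (Arc M F) e₀ v := (hmemU v).1 hvU
      have hnotins : ¬ Insertable M F v := fun hins => H ⟨v, hreach, hins⟩
      have hvF : v ∉ F j := fun h => hvFU (Finset.mem_inter.2 ⟨h, hvU⟩)
      have hdep : ¬ Ind M (insert v (F j)) := fun h => hnotins ⟨j, hvF, h⟩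
      have hDc : Dset M (F j) v ⊆ F j ∩ U := by
        intro w hw
        refine Finset.mem_inter.2 ⟨Dset_subset _ _ hw, (hmemU w).2 ?_⟩
        exact hreach.tail ⟨j, hvF, hdep, hw⟩
      exact dep_insert_Dset (hF j) hvF hdep
        (hvind.subset (Finset.insert_subset_insert _ hDc))
    have hsum : ∑ v ∈ U, Ycount F v = k * rk M U := by
      have : ∀ v ∈ U, Ycount F v = ∑ j : Fin k, (if v ∈ F j then 1 else 0) :=
        fun v _ => Ycount_eq_sum F v
      rw [Finset.sum_congr rfl this, Finset.sum_comm]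
      have : ∀ j : Fin k, (∑ v ∈ U, if v ∈ F j then 1 else 0) = rk M U := by
        intro j
        rw [← Finset.card_filter, Finset.filter_mem_eq_inter, Finset.inter_comm]
        exact hcard j
      rw [Finset.sum_congr rfl (fun j _ => this j)]
      simp [Finset.sum_const, Finset.card_univ, mul_comm]
    have he₀U : e₀ ∈ U := (hmemU e₀).2 Relation.ReflTransGen.refl
    have hlt : ∑ v ∈ U, Ycount F v < ∑ v ∈ U, z v :=
      Finset.sum_lt_sum (fun v _ => hYz v) ⟨e₀, he₀U, hdef⟩
    have := hrank U
    omega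
  case pos =>
    -- extract a path as an ℕ-indexed sequence
    have hPex : ∃ n : ℕ, ∃ u : ℕ → E, u 0 = e₀ ∧ (∀ i < n, Arc M F (u i) (u (i+1))) ∧
        Insertable M F (u n) := by
      obtain ⟨w, hreach, hins⟩ := H
      obtain ⟨n, u, hu0, hch, hend⟩ := exists_seq_of_reflTransGen hreach
      exact ⟨n, u, hu0, hch, hend ▸ hins⟩
    classical
    set n := Nat.find hPex with hn
    obtain ⟨u, hu0, hchain, hins⟩ := Nat.find_spec hPex
    have hmin : ∀ m < n, ¬ ∃ u : ℕ → E, u 0 = e₀ ∧ (∀ i < m, Arc M F (u i) (u (i+1))) ∧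
        Insertable M F (u m) := fun m hm => Nat.find_min hPex hm
    -- no early insertable vertex
    have hc' : ∀ i < n, ¬ Insertable M F (u i) := by
      intro i hi hins'
      exact hmin i hi ⟨u, hu0, fun l hl => hchain l (hl.trans hi), hins'⟩
    -- no forward shortcut
    have hb' : ∀ i l, i + 1 < l → l ≤ n → ¬ Arc M F (u i) (u l) := by
      intro i l hil hln harc
      set d := l - i - 1 with hd
      have hd1 : 1 ≤ d := by omega
      refine hmin (n - d) (by omega) ⟨fun m => if m ≤ i then u m else u (m + d), ?_, ?_, ?_⟩
      · simp [hu0]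
      · intro m hm
        rcases lt_trichotomy m i with h | rfl | h
        · simp only [Nat.le_of_lt h, Nat.succ_le_of_lt h, if_pos]
          exact hchain m (by omega)
        · simp only [le_refl, if_pos, if_neg (by omega : ¬ m + 1 ≤ m)]
          have : m + 1 + d = l := by omega
          rw [this]; exact harc
        · simp only [if_neg (by omega : ¬ m ≤ i), if_neg (by omega : ¬ m + 1 ≤ i)]
          have : m + 1 + d = (m + d) + 1 := by omega
          rw [this]
          exact hchain (m + d) (by omega)
      · simp only [if_neg (by omega : ¬ n - d ≤ i)]
        have : n - d + d = n := by omega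
        rw [this]; exact hins
    -- injectivity of u on [0, n]
    have hinj : ∀ i j, i < j → j ≤ n → u i ≠ u j := by
      intro i j hij hjn heq
      rcases Nat.lt_or_ge j n with hjn' | hjn'
      · have harc := hchain j hjn'
        rw [← heq] at harc
        exact hb' i (j+1) (by omega) (by omega) harc
      · have : j = n := by omega
        subst this
        exact hc' i hij (heq ▸ hins)
    -- labels
    have harc' : ∀ i, i < n → Arc M F (u i) (u (i+1)) := hchain
    let jf : ℕ → Fin k := fun i => if hi : i < n then Classical.choose (harc' i hi)
      else Classical.choose hins
    have hjf : ∀ i (hi : i < n), u i ∉ F (jf i) ∧ ¬ Ind M (insert (u i) (F (jf i))) ∧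
        u (i+1) ∈ Dset M (F (jf i)) (u i) := by
      intro i hi
      simp only [jf, dif_pos hi]
      exact Classical.choose_spec (harc' i hi)
    set js : Fin k := Classical.choose hins with hjs
    have hjsspec : u n ∉ F js ∧ Ind M (insert (u n) (F js)) := Classical.choose_spec hins
    -- the new family
    let Q : Fin k → Finset ℕ := fun j => (Finset.range n).filter fun i => jf i = j
    let S : Fin k → Finset E := fun j =>
      (F j \ (Q j).image (fun i => u (i+1))) ∪ (Q j).image u
    let F' : Fin k → Finset E := fun j => if j = js then insert (u n) (S j) else S j
    have hQmem : ∀ j i, i ∈ Q j ↔ i < n ∧ jf i = j := by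
      intro j i; simp [Q]
    -- hypotheses of the triangular lemma, for each j
    have hx : ∀ j, ∀ i ∈ Q j, u i ∉ F j := by
      intro j i hi
      obtain ⟨hin, rfl⟩ := (hQmem j i).1 hi
      exact (hjf i hin).1
    have hdepj : ∀ j, ∀ i ∈ Q j, ¬ Ind M (insert (u i) (F j)) := by
      intro j i hi
      obtain ⟨hin, rfl⟩ := (hQmem j i).1 hi
      exact (hjf i hin).2.1
    have hmemj : ∀ j, ∀ i ∈ Q j, u (i+1) ∈ Dset M (F j) (u i) := by
      intro j i hi
      obtain ⟨hin, rfl⟩ := (hQmem j i).1 hi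
      exact (hjf i hin).2.2
    have htrij : ∀ j, ∀ i ∈ Q j, ∀ l ∈ Q j, i < l → u (l+1) ∉ Dset M (F j) (u i) := by
      intro j i hi l hl hil hmem'
      obtain ⟨hin, hji⟩ := (hQmem j i).1 hi
      obtain ⟨hln, hjl⟩ := (hQmem j l).1 hl
      refine hb' i (l+1) (by omega) (by omega) ⟨j, ?_, ?_, hmem'⟩
      · exact hji ▸ (hjf i hin).1
      · exact hji ▸ (hjf i hin).2.1
    have hxinj : ∀ j, Set.InjOn u (Q j) := by
      intro j i hi l hl heq
      obtain ⟨hin, _⟩ := (hQmem j i).1 hi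
      obtain ⟨hln, _⟩ := (hQmem j l).1 hl
      rcases lt_trichotomy i l with h | h | h
      · exact absurd heq (hinj i l h (by omega))
      · exact h
      · exact absurd heq.symm (hinj l i h (by omega))
    have hyinj : ∀ j, Set.InjOn (fun i => u (i+1)) (Q j) := by
      intro j i hi l hl heq
      obtain ⟨hin, _⟩ := (hQmem j i).1 hi
      obtain ⟨hln, _⟩ := (hQmem j l).1 hl
      simp only at heq
      rcases lt_trichotomy i l with h | h | h
      · exact absurd heq (hinj (i+1) (l+1) (by omega) (by omega))
      · exact h
      · exact absurd heq.symm (hinj (l+1) (i+1) (by omega) (by omega))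
    have hSind : ∀ j, Ind M (S j) :=
      fun j => ind_swap (hF j) (hx j) (hdepj j) (hmemj j) (htrij j) (hxinj j) (hyinj j)
    have hF'ind : ∀ j, Ind M (F' j) := by
      intro j
      by_cases hj : j = js
      · have hF'e : F' j = insert (u n) (S j) := by simp [F', hj]
        rw [hF'e]
        refine ind_swap_insert (hF j) (hx j) (hdepj j) (hmemj j) (htrij j) (hxinj j) (hyinj j)
          (by rw [hj]; exact hjsspec.1) ?_ (by rw [hj]; exact hjsspec.2)
        intro hmem'
        obtain ⟨i, hi, heq⟩ := Finset.mem_image.1 hmem'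
        obtain ⟨hin, _⟩ := (hQmem j i).1 hi
        exact hinj i n hin le_rfl heq
      · simp only [F', if_neg hj]
        exact hSind j
    -- the counting
    refine ⟨F', hF'ind, ?_⟩
    intro e
    have hXcard : ∀ j, ∀ e, (if e ∈ (Q j).image u then 1 else 0) =
        ∑ i ∈ Q j, (if e = u i then 1 else 0) := by
      intro j e
      rw [← Finset.card_filter]
      by_cases h : e ∈ (Q j).image u
      · rw [if_pos h]
        obtain ⟨i, hi, rfl⟩ := Finset.mem_image.1 h
        have : (Q j).filter (fun l => u i = u l) = {i} := by
          ext l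
          simp only [Finset.mem_filter, Finset.mem_singleton]
          constructor
          · rintro ⟨hl, heq⟩
            exact (hxinj j hi hl heq).symm ▸ rfl
          · rintro rfl; exact ⟨hi, rfl⟩
        rw [this, Finset.card_singleton]
      · rw [if_neg h]
        symm
        rw [Finset.card_eq_zero, Finset.filter_eq_empty_iff]
        intro l hl heq
        exact h (Finset.mem_image.2 ⟨l, hl, heq.symm⟩)
    have hYcard : ∀ j, ∀ e, (if e ∈ (Q j).image (fun i => u (i+1)) then 1 else 0) =
        ∑ i ∈ Q j, (if e = u (i+1) then 1 else 0) := by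
      intro j e
      rw [← Finset.card_filter]
      by_cases h : e ∈ (Q j).image (fun i => u (i+1))
      · rw [if_pos h]
        obtain ⟨i, hi, rfl⟩ := Finset.mem_image.1 h
        have : (Q j).filter (fun l => u (i+1) = u (l+1)) = {i} := by
          ext l
          simp only [Finset.mem_filter, Finset.mem_singleton]
          constructor
          · rintro ⟨hl, heq⟩
            exact (hyinj j hi hl heq).symm ▸ rfl
          · rintro rfl; exact ⟨hi, rfl⟩
        rw [this, Finset.card_singleton]
      · rw [if_neg h]
        symm
        rw [Finset.card_eq_zero, Finset.filter_eq_empty_iff]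
        intro l hl heq
        exact h (Finset.mem_image.2 ⟨l, hl, heq.symm⟩)
    -- per-part balance equation
    have hbal : ∀ j, (if e ∈ F' j then 1 else 0)
        + (if e ∈ (Q j).image (fun i => u (i+1)) then 1 else 0)
        = (if e ∈ F j then 1 else 0) + (if e ∈ (Q j).image u then 1 else 0)
          + (if j = js ∧ e = u n then 1 else 0) := by
      intro j
      have hYsub : (Q j).image (fun i => u (i+1)) ⊆ F j := by
        intro v hv
        obtain ⟨i, hi, rfl⟩ := Finset.mem_image.1 hv
        exact Dset_subset _ _ (hmemj j i hi)
      have hXdis : ∀ v ∈ (Q j).image u, v ∉ F j := by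
        intro v hv
        obtain ⟨i, hi, rfl⟩ := Finset.mem_image.1 hv
        exact hx j i hi
      have hSmem : ∀ v, v ∈ S j ↔ (v ∈ F j ∧ v ∉ (Q j).image (fun i => u (i+1)))
          ∨ v ∈ (Q j).image u := by
        intro v
        simp only [S, Finset.mem_union, Finset.mem_sdiff]
      have hSbal : (if e ∈ S j then 1 else 0)
          + (if e ∈ (Q j).image (fun i => u (i+1)) then 1 else 0)
          = (if e ∈ F j then 1 else 0) + (if e ∈ (Q j).image u then (1:ℕ) else 0) := by
        by_cases hbX : e ∈ (Q j).image u
        · have ha : e ∉ F j := hXdis e hbX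
          have hbY : e ∉ (Q j).image (fun i => u (i+1)) := fun h => ha (hYsub h)
          have hS : e ∈ S j := (hSmem e).2 (Or.inr hbX)
          simp [hS, hbY, ha, hbX]
        · by_cases hbY : e ∈ (Q j).image (fun i => u (i+1))
          · have ha : e ∈ F j := hYsub hbY
            have hS : e ∉ S j := fun h => by
              rcases (hSmem e).1 h with ⟨_, h2⟩ | h2
              · exact h2 hbY
              · exact hbX h2
            simp [hS, hbY, ha, hbX]
          · by_cases ha : e ∈ F j
            · have hS : e ∈ S j := (hSmem e).2 (Or.inl ⟨ha, hbY⟩)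
              simp [hS, hbY, ha, hbX]
            · have hS : e ∉ S j := fun h => by
                rcases (hSmem e).1 h with ⟨h1, _⟩ | h2
                · exact ha h1
                · exact hbX h2
              simp [hS, hbY, ha, hbX]
      rcases eq_or_ne j js with hj | hj
      · have hunS : u n ∉ S j := by
          intro hmem'
          rcases (hSmem (u n)).1 hmem' with ⟨h1, _⟩ | h2
          · exact hjsspec.1 (hj ▸ h1)
          · obtain ⟨i, hi, heq⟩ := Finset.mem_image.1 h2
            obtain ⟨hin, _⟩ := (hQmem j i).1 hi
            exact hinj i n hin le_rfl heq
        have hF'e : F' j = insert (u n) (S j) := by simp [F', hj]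
        have hF'c : (if e ∈ F' j then 1 else 0)
            = (if e ∈ S j then 1 else 0) + (if e = u n then (1:ℕ) else 0) := by
          rw [hF'e]
          by_cases he : e = u n
          · simp [he, hunS]
          · simp [Finset.mem_insert, he]
        have hrhs : (if j = js ∧ e = u n then 1 else 0) = (if e = u n then (1:ℕ) else 0) := by
          simp [hj]
        rw [hF'c, hrhs, add_right_comm, hSbal]
      · have hF'e : F' j = S j := by simp [F', hj]
        have hrhs : (if j = js ∧ e = u n then 1 else 0) = (0:ℕ) := by simp [hj]
        rw [hF'e, hrhs, add_zero, hSbal]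
    -- assemble the counts
    have h1 : ∑ j : Fin k, ((if e ∈ F' j then 1 else 0)
          + (if e ∈ (Q j).image (fun i => u (i+1)) then 1 else 0))
        = ∑ j : Fin k, ((if e ∈ F j then 1 else 0) + (if e ∈ (Q j).image u then 1 else 0)
          + (if j = js ∧ e = u n then 1 else 0)) :=
      Finset.sum_congr rfl (fun j _ => hbal j)
    have h2 : ∑ j : Fin k, (if j = js ∧ e = u n then (1:ℕ) else 0)
        = (if e = u n then 1 else 0) := by
      simp only [ite_and]
      rw [Finset.sum_ite_eq' Finset.univ js (fun _ => if e = u n then (1:ℕ) else 0)]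
      simp
    simp only [Finset.sum_add_distrib] at h1
    have hYsum : ∑ j : Fin k, (if e ∈ (Q j).image (fun i => u (i+1)) then (1:ℕ) else 0)
        = ∑ i ∈ Finset.range n, (if e = u (i+1) then 1 else 0) := by
      rw [Finset.sum_congr rfl (fun j _ => hYcard j e)]
      exact Finset.sum_fiberwise_of_maps_to (fun i _ => Finset.mem_univ (jf i)) _
    have hXsum : ∑ j : Fin k, (if e ∈ (Q j).image u then (1:ℕ) else 0)
        = ∑ i ∈ Finset.range n, (if e = u i then 1 else 0) := by
      rw [Finset.sum_congr rfl (fun j _ => hXcard j e)]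
      exact Finset.sum_fiberwise_of_maps_to (fun i _ => Finset.mem_univ (jf i)) _
    have hrange : (∑ i ∈ Finset.range n, (if e = u (i+1) then (1:ℕ) else 0))
          + (if e = u 0 then 1 else 0)
        = (∑ i ∈ Finset.range n, (if e = u i then 1 else 0)) + (if e = u n then 1 else 0) := by
      rw [← Finset.sum_range_succ' (fun i => if e = u i then (1:ℕ) else 0) n,
        ← Finset.sum_range_succ (fun i => if e = u i then (1:ℕ) else 0) n]
    have hY' : Ycount F' e = ∑ j : Fin k, (if e ∈ F' j then 1 else 0) := Ycount_eq_sum F' e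
    have hYe : Ycount F e = ∑ j : Fin k, (if e ∈ F j then 1 else 0) := Ycount_eq_sum F e
    have hu0e : (if e = e₀ then (1:ℕ) else 0) = (if e = u 0 then (1:ℕ) else 0) := by rw [hu0]
    rw [hY', hYe, hu0e]
    linarith [h1, h2, hYsum, hXsum, hrange]

end Aug

end MBIN

namespace MBIN

set_option linter.unusedSectionVars false
set_option maxHeartbeats 1000000

attribute [local instance] Classical.propDecidable

variable {E : Type} [Fintype E] {M : Matroid E} {k : ℕ}

lemma reach_partition (z : E → ℕ) (hrank : ∀ X : Finset E, ∑ e ∈ X, z e ≤ k * rk M X) :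
    ∀ d : ℕ, ∀ F : Fin k → Finset E, (∀ j, Ind M (F j)) → (∀ e, Ycount F e ≤ z e) →
    (∑ e : E, Ycount F e) + d = ∑ e : E, z e →
    ∃ F' : Fin k → Finset E, (∀ j, Ind M (F' j)) ∧ ∀ e, Ycount F' e = z e := by
  intro d
  induction d with
  | zero =>
    intro F hF hYz hsum
    refine ⟨F, hF, fun e => le_antisymm (hYz e) ?_⟩
    by_contra h
    push_neg at h
    have : ∑ e : E, Ycount F e < ∑ e : E, z e :=
      Finset.sum_lt_sum (fun v _ => hYz v) ⟨e, Finset.mem_univ e, h⟩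
    omega
  | succ d ih =>
    intro F hF hYz hsum
    have hex : ∃ e₀, Ycount F e₀ < z e₀ := by
      by_contra h
      push_neg at h
      have : ∀ e, Ycount F e = z e := fun e => le_antisymm (hYz e) (h e)
      have : ∑ e : E, Ycount F e = ∑ e : E, z e := Finset.sum_congr rfl fun e _ => this e
      omega
    obtain ⟨e₀, he₀⟩ := hex
    obtain ⟨F', hF', hYF'⟩ := aug z hrank F hF hYz e₀ he₀
    refine ih F' hF' ?_ ?_
    · intro e
      rw [hYF' e]
      by_cases he : e = e₀
      · subst he; rw [if_pos rfl]; omega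
      · simp only [if_neg he]; exact Nat.add_zero _ ▸ hYz e
    · have : ∑ e : E, Ycount F' e = (∑ e : E, Ycount F e) + 1 := by
        rw [Finset.sum_congr rfl fun e _
          => hYF' e, Finset.sum_add_distrib]
        congr 1
        rw [Finset.sum_ite_eq' Finset.univ e₀ (fun _ => 1)]
        simp
      omega

lemma base_of_card {I : Finset E} (hI : Ind M I) (hc : I.card = rk M Finset.univ) :
    M.IsBase (I : Set E) := by
  refine Matroid.Indep.isBase_of_forall_insert hI ?_
  rintro e ⟨-, heI⟩ hins
  have heI' : e ∉ I := by simpa using heI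
  have : Ind M (insert e I) := by
    rw [Ind, Finset.coe_insert]; exact hins
  have := card_le_rk this (Finset.subset_univ _)
  rw [Finset.card_insert_of_notMem heI'] at this
  omega

/-- Core decomposition theorem: matroid union / base partition. -/
theorem core_decomp (z : E → ℕ) (hrank : ∀ X : Finset E, ∑ e ∈ X, z e ≤ k * rk M X)
    (hsum : ∑ e : E, z e = k * rk M Finset.univ) :
    ∃ F : Fin k → Finset E, (∀ j, M.IsBase ((F j : Set E))) ∧
      ∀ e, (Ycount F e) = z e := by
  obtain ⟨F, hF, hYF⟩ := reach_partition z hrank (∑ e : E, z e)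
    (fun _ => ∅) (fun _ => ind_empty) (by intro e; simp [Ycount]) (by simp [Ycount])
  have hcards : ∑ j : Fin k, (F j).card = k * rk M Finset.univ := by
    have h1 : ∀ j : Fin k, (F j).card = ∑ e : E, (if e ∈ F j then 1 else 0) := by
      intro j
      rw [← Finset.card_filter, Finset.filter_mem_eq_inter, Finset.univ_inter]
    rw [Finset.sum_congr rfl fun j _ => h1 j, Finset.sum_comm, ← hsum]
    exact Finset.sum_congr rfl fun e _ => by rw [← Ycount_eq_sum, hYF e]
  have hle : ∀ j : Fin k, (F j).card ≤ rk M Finset.univ :=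
    fun j => card_le_rk (hF j) (Finset.subset_univ _)
  have hcard : ∀ j : Fin k, (F j).card = rk M Finset.univ := by
    intro j
    by_contra h
    have hlt : (F j).card < rk M Finset.univ := lt_of_le_of_ne (hle j) h
    have : ∑ j : Fin k, (F j).card < ∑ _j : Fin k, rk M Finset.univ :=
      Finset.sum_lt_sum (fun i _ => hle i) ⟨j, Finset.mem_univ j, hlt⟩
    rw [Finset.sum_const, Finset.card_univ, Fintype.card_fin, smul_eq_mul] at this
    omega
  exact ⟨F, fun j => base_of_card (hF j) (hcard j), hYF⟩

end MBIN

namespace MBIN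

set_option linter.unusedSectionVars false
set_option maxHeartbeats 1000000

attribute [local instance] Classical.propDecidable

variable {E : Type} [Fintype E] {M : Matroid E}

lemma coe_filter_mem (B : Set E) : ((Finset.univ.filter (· ∈ B) : Finset E) : Set E) = B := by
  ext e; simp

lemma base_filter_card {B : Set E} (hB : M.IsBase B) :
    (Finset.univ.filter (· ∈ B)).card = rk M Finset.univ := by
  have hInd : Ind M (Finset.univ.filter (· ∈ B)) := by
    rw [Ind, coe_filter_mem]; exact hB.indep
  refine le_antisymm (card_le_rk hInd (Finset.subset_univ _)) ?_
  by_contra h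
  push_neg at h
  obtain ⟨I, hIX, hI, hIc⟩ := exists_basis (M := M) Finset.univ
  obtain ⟨x, hxI, hxB, hx⟩ := hInd.augment hI (by omega)
  have hxB' : x ∉ B := by simpa using hxB
  have hind : M.Indep (insert x B) := by
    have := hx
    rw [Ind, Finset.coe_insert, coe_filter_mem] at this
    exact this
  have := hB.eq_of_subset_indep hind (Set.subset_insert x B)
  exact hxB' (this ▸ Set.mem_insert x B)

lemma filter_base_inter_card_le {B : Set E} (hB : M.IsBase B) (X : Finset E) :
    (X.filter (· ∈ B)).card ≤ rk M X := by
  refine card_le_rk ?_ (Finset.filter_subset _ _)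
  rw [Ind]
  refine hB.indep.subset ?_
  intro e he
  simp only [Finset.coe_filter, Set.mem_setOf_eq] at he
  exact he.2

lemma sum_indicator_eq (B : Set E) (X : Finset E) :
    ∑ e ∈ X, B.indicator (1 : E → ℤ) e = ((X.filter (· ∈ B)).card : ℤ) := by
  rw [Finset.card_filter]
  push_cast
  refine Finset.sum_congr rfl fun e _ => ?_
  rw [Set.indicator_apply]
  by_cases h : e ∈ B <;> simp [h]

end MBIN

/-- The set `A` of indicator vectors of the bases of a matroid on a
finite ground set is normal: every element of the subgroup of `(ℤᴱ,+)` generated by `A`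
whose image in `ℝᴱ` lies in the cone of nonnegative real combinations of `A` already
belongs to the additive submonoid generated by `A`. -/
theorem matroid_base_indicator_vectors_normal
    {E : Type} [Fintype E] (M : Matroid E)
    (A : Set (E → ℤ))
    (hA : A = {a : E → ℤ | ∃ B : Set E, M.IsBase B ∧ a = B.indicator 1})
    (z : E → ℤ) (hz : z ∈ AddSubgroup.closure A)
    (hcone : (fun i => (z i : ℝ)) ∈
      Submodule.span NNReal ((fun a : E → ℤ => fun i => (a i : ℝ)) '' A)) :
    z ∈ AddSubmonoid.closure A := by
  classical
  set R : ℕ := MBIN.rk M Finset.univ with hR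
  -- unpack the cone hypothesis
  obtain ⟨m, lam, g, hg⟩ := Submodule.mem_span_set'.1 hcone
  have hgB : ∀ i : Fin m, ∃ B : Set E, M.IsBase B ∧
      (g i : E → ℝ) = fun e => if e ∈ B then 1 else 0 := by
    intro i
    obtain ⟨a, haA, hae⟩ := (g i).2
    rw [hA] at haA
    obtain ⟨B, hB, rfl⟩ := haA
    refine ⟨B, hB, ?_⟩
    rw [← hae]
    funext e
    by_cases h : e ∈ B <;> simp [Set.indicator_apply, h]
  choose Bf hBf hgBf using hgB
  -- pointwise formula
  have hpt : ∀ e : E, (z e : ℝ) = ∑ i : Fin m, (lam i : ℝ) * (if e ∈ Bf i then 1 else 0) := by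
    intro e
    have := congrFun hg e
    simp only [Finset.sum_apply, Pi.smul_apply] at this
    rw [← this]
    refine Finset.sum_congr rfl fun i _ => ?_
    simp [hgBf i, NNReal.smul_def]
  -- nonnegativity
  have hz0 : ∀ e : E, 0 ≤ z e := by
    intro e
    have : (0:ℝ) ≤ (z e : ℝ) := by
      rw [hpt e]
      refine Finset.sum_nonneg fun i _ => mul_nonneg (lam i).coe_nonneg ?_
      by_cases h : e ∈ Bf i <;> simp [h]
    exact_mod_cast this
  -- sum over any finset
  have hsumX : ∀ X : Finset E, (∑ e ∈ X, (z e : ℝ))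
      = ∑ i : Fin m, (lam i : ℝ) * ((X.filter (· ∈ Bf i)).card : ℝ) := by
    intro X
    rw [Finset.sum_congr rfl fun e _ => hpt e, Finset.sum_comm]
    refine Finset.sum_congr rfl fun i _ => ?_
    rw [← Finset.mul_sum]
    congr 1
    rw [Finset.card_filter]
    push_cast
    rfl
  have hrankX : ∀ X : Finset E, (∑ e ∈ X, (z e : ℝ))
      ≤ (∑ i : Fin m, (lam i : ℝ)) * (MBIN.rk M X : ℝ) := by
    intro X
    rw [hsumX X, Finset.sum_mul]
    refine Finset.sum_le_sum fun i _ => ?_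
    refine mul_le_mul_of_nonneg_left ?_ (lam i).coe_nonneg
    exact_mod_cast MBIN.filter_base_inter_card_le (hBf i) X
  have huniv : (∑ e : E, (z e : ℝ)) = (∑ i : Fin m, (lam i : ℝ)) * (R : ℝ) := by
    rw [hsumX Finset.univ, Finset.sum_mul]
    refine Finset.sum_congr rfl fun i _ => ?_
    congr 2
    rw [MBIN.base_filter_card (hBf i)]
  -- the subgroup hypothesis
  have hAne : A.Nonempty := by
    obtain ⟨B, hB⟩ := M.exists_isBase
    exact ⟨B.indicator 1, by rw [hA]; exact ⟨B, hB, rfl⟩⟩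
  set φ : (E → ℤ) →+ ℤ := AddMonoidHom.mk' (fun x => ∑ e : E, x e)
    (fun a b => by simp [Finset.sum_add_distrib]) with hφ
  have hφA : ∀ a ∈ A, φ a = (R : ℤ) := by
    intro a haA
    rw [hA] at haA
    obtain ⟨B, hB, rfl⟩ := haA
    show ∑ e : E, B.indicator 1 e = (R : ℤ)
    rw [MBIN.sum_indicator_eq B Finset.univ, MBIN.base_filter_card hB]
  have hφz : ∃ c : ℤ, c • (R : ℤ) = φ z := by
    have h1 : φ z ∈ AddSubgroup.closure (φ '' A) := by
      rw [← AddMonoidHom.map_closure]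
      exact AddSubgroup.mem_map_of_mem φ hz
    have h2 : φ '' A = {(R : ℤ)} := by
      apply Set.Subset.antisymm
      · rintro x ⟨a, haA, rfl⟩
        exact hφA a haA
      · rintro x hx
        obtain ⟨a, haA⟩ := hAne
        exact ⟨a, haA, by rw [hφA a haA, Set.mem_singleton_iff.1 hx]⟩
    rw [h2] at h1
    exact AddSubgroup.mem_closure_singleton.1 h1
  obtain ⟨c, hc⟩ := hφz
  have hφzval : φ z = ∑ e : E, z e := rfl
  rcases Nat.eq_zero_or_pos R with hR0 | hRpos
  · -- R = 0 : z = 0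
    have hsum0 : (∑ e : E, (z e : ℝ)) = 0 := by rw [huniv, hR0]; simp
    have : (∑ e : E, z e) = 0 := by
      have : ((∑ e : E, z e : ℤ) : ℝ) = 0 := by push_cast; exact hsum0
      exact_mod_cast this
    have hz00 : ∀ e ∈ Finset.univ, z e = 0 :=
      (Finset.sum_eq_zero_iff_of_nonneg (fun e _ => hz0 e)).1 this
    have : z = 0 := funext fun e => hz00 e (Finset.mem_univ e)
    rw [this]
    exact AddSubmonoid.zero_mem _
  · -- R > 0
    have hlamsum : (∑ i : Fin m, (lam i : ℝ)) = (c : ℝ) := by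
      have h1 : ((φ z : ℤ) : ℝ) = (∑ i : Fin m, (lam i : ℝ)) * (R : ℝ) := by
        rw [hφzval]; push_cast; exact huniv
      have h2 : ((φ z : ℤ) : ℝ) = (c : ℝ) * (R : ℝ) := by
        rw [← hc, smul_eq_mul]; push_cast; ring
      have hRne : (R : ℝ) ≠ 0 := by
        simp only [ne_eq, Nat.cast_eq_zero]
        omega
      have h3 : (∑ i : Fin m, (lam i : ℝ)) * (R:ℝ) = (c:ℝ) * (R:ℝ) := by rw [← h1, h2]
      exact mul_right_cancel₀ hRne h3
    have hc0 : 0 ≤ c := by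
      have : (0:ℝ) ≤ (c : ℝ) := by
        rw [← hlamsum]
        exact Finset.sum_nonneg fun i _ => (lam i).coe_nonneg
      exact_mod_cast this
    set k : ℕ := c.toNat with hk
    have hkc : (k : ℤ) = c := Int.toNat_of_nonneg hc0
    have hkR : (k : ℝ) = ∑ i : Fin m, (lam i : ℝ) := by
      rw [hlamsum, ← hkc]; push_cast; rfl
    set zn : E → ℕ := fun e => (z e).toNat with hzn
    have hznz : ∀ e, ((zn e : ℤ)) = z e := fun e => Int.toNat_of_nonneg (hz0 e)
    have hznzr : ∀ e, ((zn e : ℝ)) = (z e : ℝ) := by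
      intro e
      exact_mod_cast congrArg (fun t : ℤ => (t : ℝ)) (hznz e)
    have hrank : ∀ X : Finset E, ∑ e ∈ X, zn e ≤ k * MBIN.rk M X := by
      intro X
      have : ((∑ e ∈ X, zn e : ℕ) : ℝ) ≤ ((k * MBIN.rk M X : ℕ) : ℝ) := by
        push_cast
        rw [Finset.sum_congr rfl fun e _ => hznzr e]
        calc (∑ e ∈ X, (z e : ℝ)) ≤ (∑ i : Fin m, (lam i : ℝ)) * (MBIN.rk M X : ℝ) := hrankX X
        _ = (k : ℝ) * (MBIN.rk M X : ℝ) := by rw [hkR]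
      exact_mod_cast this
    have hsum : ∑ e : E, zn e = k * R := by
      have : ((∑ e : E, zn e : ℕ) : ℝ) = ((k * R : ℕ) : ℝ) := by
        push_cast
        rw [Finset.sum_congr rfl fun e _ => hznzr e, huniv, hkR]
      exact_mod_cast this
    obtain ⟨F, hFbase, hFY⟩ := MBIN.core_decomp (M := M) (k := k) zn hrank hsum
    have hzdecomp : z = ∑ j : Fin k, ((F j : Set E)).indicator (1 : E → ℤ) := by
      funext e
      rw [← hznz e]
      have : (∑ j : Fin k, ((F j : Set E)).indicator (1 : E → ℤ)) e
          = ∑ j : Fin k, (if e ∈ F j then (1:ℤ) else 0) := by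
        rw [Finset.sum_apply]
        refine Finset.sum_congr rfl fun j _ => ?_
        rw [Set.indicator_apply]
        by_cases h : e ∈ F j <;> simp [h]
      rw [this, ← hFY e, MBIN.Ycount_eq_sum]
      push_cast
      rfl
    rw [hzdecomp]
    refine AddSubmonoid.sum_mem _ fun j _ => AddSubmonoid.subset_closure ?_
    rw [hA]
    exact ⟨(F j : Set E), hFbase j, rfl⟩
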